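/- Let n ∈ ℕ, A = {0,...,n}, and let B ⊂ {0,...,n} be an arithmetic progression with diameter D = max B − min B > 0. Then the (|B|·D)⁻¹-covering number of [0,1] ∩ { a/b : a ∈ A − A, b ∈ (B − B) \ {0} } is at least c·|B|·D for an absolute constant c > 0. -/

import Mathlib

/-- The `ρ`-covering number of `X ⊂ ℝ`. -/
noncomputable def covN (ρ : ℝ) (X : Set ℝ) : ℕ :=
  sInf {k : ℕ | ∃ s : Finset ℝ, s.card = k ∧ X ⊆ ⋃ p ∈ s, Set.Icc p (p + ρ)}

open Finset


lemma sum_inv_sq_aux (m : ℕ) :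
    ∑ d ∈ Icc 2 (m+2), (1 / (d:ℝ))^2 ≤ 3/4 - 1/((m:ℝ)+2) := by
  induction m with
  | zero => norm_num
  | succ m ih =>
    have h : (Icc 2 (m+3) : Finset ℕ) = insert (m+3) (Icc 2 (m+2)) := by
      rw [show m+3 = (m+2)+1 from rfl, Finset.insert_Icc_right_eq_Icc_add_one (by omega)]
    rw [show m+1+2 = m+3 from rfl, h, Finset.sum_insert (by simp)]
    have h1 : (1 / ((m:ℝ)+3))^2 ≤ 1/((m:ℝ)+2) - 1/((m:ℝ)+3) := by
      rw [div_sub_div _ _ (by positivity) (by positivity)]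
      rw [div_pow, one_pow, div_le_div_iff₀ (by positivity) (by positivity)]
      nlinarith [sq_nonneg ((m:ℝ)+3)]
    have h2 : ((m:ℝ)+1)+2 = (m:ℝ)+3 := by ring
    push_cast [h2] at ih ⊢
    linarith

lemma sum_inv_sq (k : ℕ) : ∑ d ∈ Icc 2 k, (1 / (d:ℝ))^2 ≤ 3/4 := by
  match k with
  | 0 => norm_num
  | 1 => norm_num
  | (m+2) =>
    have h := sum_inv_sq_aux m
    have h2 : (0:ℝ) < 1/((m:ℝ)+2) := by positivity
    linarith




lemma coprime_count (k : ℕ) :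
    ((k:ℝ)^2)/4 ≤ (((Icc 1 k ×ˢ Icc 1 k)).filter (fun p => Nat.gcd p.1 p.2 = 1)).card := by
  classical
  set S : Finset (ℕ × ℕ) := Icc 1 k ×ˢ Icc 1 k with hS
  have hcardS : S.card = k^2 := by
    simp [hS, Finset.card_product, Nat.card_Icc, sq]
  have hsplit := Finset.card_filter_add_card_filter_not
    (s := S) (p := fun p => Nat.gcd p.1 p.2 = 1)
  have hsub : S.filter (fun p => ¬ Nat.gcd p.1 p.2 = 1) ⊆
      (Icc 2 k).biUnion (fun d => ({x ∈ Ioc 0 k | d ∣ x}) ×ˢ ({x ∈ Ioc 0 k | d ∣ x})) := by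
    intro p hp
    simp only [mem_filter, hS, mem_product, mem_Icc] at hp
    obtain ⟨⟨⟨hx1, hxk⟩, hy1, hyk⟩, hg⟩ := hp
    have hxpos : 0 < p.1 := hx1
    have hd2 : 2 ≤ Nat.gcd p.1 p.2 := by
      have h0 : Nat.gcd p.1 p.2 ≠ 0 := fun h =>
        absurd (Nat.eq_zero_of_gcd_eq_zero_left h) (by omega)
      omega
    have hdk : Nat.gcd p.1 p.2 ≤ k := le_trans (Nat.gcd_le_left _ hxpos) hxk
    rw [Finset.mem_biUnion]
    refine ⟨Nat.gcd p.1 p.2, by simp [mem_Icc, hd2, hdk], ?_⟩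
    simp only [mem_product, mem_filter, mem_Ioc]
    exact ⟨⟨⟨hxpos, hxk⟩, Nat.gcd_dvd_left _ _⟩, ⟨⟨by omega, hyk⟩, Nat.gcd_dvd_right _ _⟩⟩
  have hcardCc : (S.filter (fun p => ¬ Nat.gcd p.1 p.2 = 1)).card
      ≤ ∑ d ∈ Icc 2 k, (k/d)^2 := by
    refine le_trans (Finset.card_le_card hsub) ?_
    refine le_trans (Finset.card_biUnion_le) ?_
    refine Finset.sum_le_sum fun d _ => ?_
    rw [Finset.card_product, Nat.Ioc_filter_dvd_card_eq_div, sq]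
  have hreal : (∑ d ∈ Icc 2 k, ((k/d)^2 : ℕ) : ℝ) ≤ 3/4 * (k:ℝ)^2 := by
    push_cast
    have : ∀ d ∈ Icc 2 k, ((k/d : ℕ) : ℝ)^2 ≤ (k:ℝ)^2 * (1/(d:ℝ))^2 := by
      intro d hd
      have hd0 : (0:ℝ) < d := by
        simp only [mem_Icc] at hd
        exact_mod_cast Nat.lt_of_lt_of_le (by norm_num) hd.1
      have h1 : ((k/d : ℕ) : ℝ) ≤ (k:ℝ)/d := Nat.cast_div_le
      have h2 : (0:ℝ) ≤ ((k/d : ℕ) : ℝ) := Nat.cast_nonneg _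
      calc ((k/d : ℕ) : ℝ)^2 ≤ ((k:ℝ)/d)^2 := by nlinarith
        _ = (k:ℝ)^2 * (1/(d:ℝ))^2 := by field_simp
    calc (∑ d ∈ Icc 2 k, ((k/d : ℕ) : ℝ)^2) ≤ ∑ d ∈ Icc 2 k, (k:ℝ)^2 * (1/(d:ℝ))^2 :=
          Finset.sum_le_sum this
      _ = (k:ℝ)^2 * ∑ d ∈ Icc 2 k, (1/(d:ℝ))^2 := by rw [Finset.mul_sum]
      _ ≤ (k:ℝ)^2 * (3/4) := by
          have := sum_inv_sq k
          nlinarith [sq_nonneg (k:ℝ)]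
      _ = 3/4 * (k:ℝ)^2 := by ring
  have h1 : ((S.filter (fun p => ¬ Nat.gcd p.1 p.2 = 1)).card : ℝ) ≤ 3/4 * (k:ℝ)^2 := by
    calc ((S.filter (fun p => ¬ Nat.gcd p.1 p.2 = 1)).card : ℝ)
        ≤ (∑ d ∈ Icc 2 k, ((k/d)^2 : ℕ) : ℝ) := by exact_mod_cast hcardCc
      _ ≤ 3/4 * (k:ℝ)^2 := hreal
  have h2 : ((S.filter (fun p => Nat.gcd p.1 p.2 = 1)).card : ℝ)
      + ((S.filter (fun p => ¬ Nat.gcd p.1 p.2 = 1)).card : ℝ) = (k:ℝ)^2 := by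
    rw [← Nat.cast_add, hsplit, hcardS]; push_cast; ring
  linarith

lemma T_count (k : ℕ) :
    ((k:ℝ)^2)/8 ≤ (((Icc 1 k ×ˢ Icc 1 k)).filter
      (fun p => Nat.gcd p.1 p.2 = 1 ∧ p.1 ≤ p.2)).card := by
  classical
  set C := ((Icc 1 k ×ˢ Icc 1 k)).filter (fun p => Nat.gcd p.1 p.2 = 1) with hC
  set T := ((Icc 1 k ×ˢ Icc 1 k)).filter (fun p => Nat.gcd p.1 p.2 = 1 ∧ p.1 ≤ p.2) with hT
  have hsub : C ⊆ T ∪ T.image Prod.swap := by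
    intro p hp
    simp only [hC, mem_filter, mem_product, mem_Icc] at hp
    rcases le_or_gt p.1 p.2 with h | h
    · exact Finset.mem_union_left _ (by simp [hT, mem_filter, mem_product, mem_Icc]; tauto)
    · refine Finset.mem_union_right _ ?_
      rw [Finset.mem_image]
      refine ⟨(p.2, p.1), ?_, by simp⟩
      simp only [hT, mem_filter, mem_product, mem_Icc]
      exact ⟨⟨hp.1.2, hp.1.1⟩, by rw [Nat.gcd_comm]; exact hp.2, le_of_lt h⟩
  have hcard : C.card ≤ 2 * T.card := by
    have h1 : C.card ≤ (T ∪ T.image Prod.swap).card := Finset.card_le_card hsub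
    have h2 := Finset.card_union_le T (T.image Prod.swap)
    have h3 := Finset.card_image_le (f := Prod.swap) (s := T)
    omega
  have := coprime_count k
  have h2 : ((C.card : ℝ)) ≤ 2 * T.card := by exact_mod_cast hcard
  linarith


lemma f_injOn (k G : ℕ) (hG : 1 ≤ G) :
    Set.InjOn (fun q : (ℕ × ℕ) × ℕ => ((q.1.1 + q.2 * q.1.2 : ℕ) : ℝ) / ((q.1.2 * G : ℕ) : ℝ))
      ((((Icc 1 k ×ˢ Icc 1 k)).filter (fun p => Nat.gcd p.1 p.2 = 1 ∧ p.1 ≤ p.2)) ×ˢ range G) := by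
  rintro ⟨⟨x, y⟩, m⟩ h1 ⟨⟨x', y'⟩, m'⟩ h2 heq
  simp only [Finset.coe_product, Finset.coe_filter, Set.mem_prod, Set.mem_setOf_eq,
    Finset.mem_product, Finset.mem_Icc, Finset.coe_range, Set.mem_Iio] at h1 h2
  obtain ⟨⟨⟨⟨hx1, hxk⟩, hy1, hyk⟩, hcop, hxy⟩, hm⟩ := h1
  obtain ⟨⟨⟨⟨hx1', hxk'⟩, hy1', hyk'⟩, hcop', hxy'⟩, hm'⟩ := h2
  simp only at heq
  have hy0 : 0 < y := hy1
  have hy0' : 0 < y' := hy1'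
  have hG0 : 0 < G := hG
  have hden : ((y * G : ℕ) : ℝ) ≠ 0 := by
    have : 0 < y * G := Nat.mul_pos hy0 hG0
    exact_mod_cast this.ne'
  have hden' : ((y' * G : ℕ) : ℝ) ≠ 0 := by
    have : 0 < y' * G := Nat.mul_pos hy0' hG0
    exact_mod_cast this.ne'
  rw [div_eq_div_iff hden hden'] at heq
  have hnat : (x + m * y) * (y' * G) = (x' + m' * y') * (y * G) := by exact_mod_cast heq
  have key : (x + m * y) * y' = (x' + m' * y') * y := by
    have h1 : ((x + m * y) * y') * G = ((x' + m' * y') * y) * G := by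
      rw [mul_assoc, mul_assoc]; exact hnat
    exact Nat.eq_of_mul_eq_mul_right hG0 h1
  have cop : Nat.Coprime (x + m * y) y := by
    unfold Nat.Coprime
    rw [Nat.gcd_add_mul_right_left y x m]
    exact hcop
  have cop' : Nat.Coprime (x' + m' * y') y' := by
    unfold Nat.Coprime
    rw [Nat.gcd_add_mul_right_left y' x' m']
    exact hcop'
  have hdy : y ∣ y' := by
    refine Nat.Coprime.dvd_of_dvd_mul_left (cop.symm) ?_
    rw [key]
    exact dvd_mul_left y _
  have hdy' : y' ∣ y := by
    refine Nat.Coprime.dvd_of_dvd_mul_left (cop'.symm) ?_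
    rw [← key]
    exact dvd_mul_left y' _
  have hyy : y = y' := Nat.dvd_antisymm hdy hdy'
  subst hyy
  have key2 : x + m * y = x' + m' * y := Nat.eq_of_mul_eq_mul_right hy0 key
  have hmm : m = m' := by
    rcases Nat.lt_trichotomy m m' with h | h | h
    · exfalso
      have h5 : (m + 1) * y ≤ m' * y := Nat.mul_le_mul_right y h
      have h6 : (m + 1) * y = m * y + y := by ring
      linarith
    · exact h
    · exfalso
      have h5 : (m' + 1) * y ≤ m * y := Nat.mul_le_mul_right y h
      have h6 : (m' + 1) * y = m' * y + y := by ring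
      linarith
  subst hmm
  have hxx : x = x' := by omega
  simp [hxx]


lemma sep_lemma (k G a a' y y' : ℕ) (hG : 1 ≤ G) (hy : 1 ≤ y) (hy' : 1 ≤ y')
    (hyk : y ≤ k) (hyk' : y' ≤ k)
    (hne : ((a:ℝ)/((y*G:ℕ):ℝ)) ≠ ((a':ℝ)/((y'*G:ℕ):ℝ))) :
    1/((k:ℝ)*k*G) ≤ |(a:ℝ)/((y*G:ℕ):ℝ) - (a':ℝ)/((y'*G:ℕ):ℝ)| := by
  have hyR : (0:ℝ) < y := by exact_mod_cast hy
  have hyR' : (0:ℝ) < y' := by exact_mod_cast hy'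
  have hGR : (0:ℝ) < G := by exact_mod_cast hG
  have hkR : (0:ℝ) < k := lt_of_lt_of_le hyR (by exact_mod_cast hyk)
  set z : ℤ := (a:ℤ) * y' - (a':ℤ) * y with hz
  have hzr : (z:ℝ) = (a:ℝ) * y' - (a':ℝ) * y := by rw [hz]; push_cast; ring
  have hdiff : (a:ℝ)/((y*G:ℕ):ℝ) - (a':ℝ)/((y'*G:ℕ):ℝ) = (z:ℝ)/((y:ℝ)*y'*G) := by
    rw [hzr]
    push_cast
    field_simp
  have hz0 : z ≠ 0 := by
    intro h
    apply hne
    have h2 : (a:ℝ) * y' - (a':ℝ) * y = 0 := by rw [← hzr, h]; norm_num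
    push_cast
    rw [div_eq_div_iff (by positivity) (by positivity)]
    linear_combination (G:ℝ) * h2
  have hz1 : (1:ℝ) ≤ |(z:ℝ)| := by
    have h3 := Int.one_le_abs hz0
    calc (1:ℝ) = ((1:ℤ):ℝ) := by norm_num
      _ ≤ ((|z|:ℤ):ℝ) := by exact_mod_cast h3
      _ = |(z:ℝ)| := by push_cast; rfl
  rw [hdiff, abs_div, abs_of_pos (show (0:ℝ) < (y:ℝ)*y'*G by positivity)]
  have h1 : 1/((k:ℝ)*k*G) ≤ 1/((y:ℝ)*y'*G) := by
    apply one_div_le_one_div_of_le (by positivity)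
    have hyk2 : (y:ℝ) ≤ k := by exact_mod_cast hyk
    have hyk2' : (y':ℝ) ≤ k := by exact_mod_cast hyk'
    exact mul_le_mul (mul_le_mul hyk2 hyk2' hyR'.le hkR.le) (le_refl _) hGR.le
      (by positivity)
  refine le_trans h1 ?_
  gcongr



lemma cover_exists (ρ : ℝ) (hρ : 0 < ρ) :
    ∃ s : Finset ℝ, Set.Icc (0:ℝ) 1 ⊆ ⋃ p ∈ s, Set.Icc p (p + ρ) := by
  refine ⟨(Finset.range (⌊1/ρ⌋₊ + 1)).image (fun i : ℕ => (i:ℝ) * ρ), ?_⟩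
  intro x hx
  obtain ⟨hx0, hx1⟩ := hx
  have hxρ : 0 ≤ x / ρ := div_nonneg hx0 hρ.le
  have h1 : (⌊x / ρ⌋₊:ℝ) ≤ x / ρ := Nat.floor_le hxρ
  have h2 : x / ρ < ⌊x / ρ⌋₊ + 1 := Nat.lt_floor_add_one _
  simp only [Set.mem_iUnion, Finset.mem_coe, Finset.mem_image, Finset.mem_range]
  refine ⟨(⌊x / ρ⌋₊:ℝ) * ρ, ⟨⌊x / ρ⌋₊, ?_, rfl⟩, ?_, ?_⟩
  · have : x / ρ ≤ 1 / ρ := by gcongr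
    have := Nat.floor_mono this
    omega
  · calc (⌊x / ρ⌋₊:ℝ) * ρ ≤ (x / ρ) * ρ := by gcongr
      _ = x := by field_simp
  · have : x < ((⌊x / ρ⌋₊:ℝ) + 1) * ρ := by
      calc x = (x / ρ) * ρ := by field_simp
        _ < ((⌊x / ρ⌋₊:ℝ) + 1) * ρ := by gcongr
    linarith [this]

lemma covN_ge (ρ : ℝ) (hρ : 0 < ρ) (X : Set ℝ) (hX : X ⊆ Set.Icc 0 1) (P : Finset ℝ)
    (hPX : ∀ q ∈ P, q ∈ X) (δ : ℝ) (hδ : ρ < δ)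
    (hsep : ∀ q ∈ P, ∀ q' ∈ P, q ≠ q' → δ ≤ |q - q'|) :
    P.card ≤ covN ρ X := by
  classical
  unfold covN
  apply le_csInf
  · obtain ⟨s, hs⟩ := cover_exists ρ hρ
    exact ⟨s.card, s, rfl, fun x hx => hs (hX hx)⟩
  · rintro N ⟨s, rfl, hcov⟩
    by_contra hlt
    push_neg at hlt
    have hex : ∀ q ∈ P, ∃ p ∈ s, q ∈ Set.Icc p (p + ρ) := by
      intro q hq
      have := hcov (hPX q hq)
      simpa only [Set.mem_iUnion, Finset.mem_coe, exists_prop] using this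
    set F : ℝ → ℝ := fun q => if h : ∃ p ∈ s, q ∈ Set.Icc p (p + ρ) then h.choose else 0
      with hF
    have hmaps : ∀ q ∈ P, F q ∈ s := by
      intro q hq
      rw [hF]
      simp only [dif_pos (hex q hq)]
      exact (hex q hq).choose_spec.1
    obtain ⟨q, hq, q', hq', hne, heq⟩ :=
      Finset.exists_ne_map_eq_of_card_lt_of_maps_to hlt hmaps
    have h1 : q ∈ Set.Icc (F q) (F q + ρ) := by
      rw [hF]; simp only [dif_pos (hex q hq)]; exact (hex q hq).choose_spec.2
    have h2 : q' ∈ Set.Icc (F q) (F q + ρ) := by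
      rw [heq, hF]; simp only [dif_pos (hex q' hq')]; exact (hex q' hq').choose_spec.2
    have hle : |q - q'| ≤ ρ := by
      rw [abs_sub_le_iff]
      obtain ⟨a1, b1⟩ := h1
      obtain ⟨a2, b2⟩ := h2
      constructor <;> linarith
    have := hsep q hq q' hq' hne
    linarith

/-- Let `A = {0,…,n}` and let `B ⊆ {0,…,n}` be an arithmetic progression
`B = {b₀, b₀+g, …, b₀+k·g}` with gap `g > 0` and diameter `D = k·g > 0` (so `|B| = k+1`).
Then the `(|B|·D)⁻¹`-covering number of `[0,1] ∩ (A−A)/((B−B)\{0})` is at least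
`c·|B|·D` for an absolute constant `c > 0`. -/
theorem stmt2 :
    ∃ c : ℝ, 0 < c ∧ ∀ (n k : ℕ) (b₀ g : ℤ), 0 < g → 0 < k →
      (∀ i : ℕ, i ≤ k → 0 ≤ b₀ + (i:ℤ) * g ∧ b₀ + (i:ℤ) * g ≤ (n:ℤ)) →
      ∀ D : ℝ, D = (k : ℝ) * (g : ℝ) →
      c * ((k + 1 : ℝ) * D) ≤
        (covN ((k + 1 : ℝ) * D)⁻¹
          (Set.Icc (0:ℝ) 1 ∩
            {x : ℝ | ∃ a b : ℤ,
              (∃ a₁ a₂ : ℤ, 0 ≤ a₁ ∧ a₁ ≤ (n:ℤ) ∧ 0 ≤ a₂ ∧ a₂ ≤ (n:ℤ) ∧ a = a₁ - a₂) ∧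
              (∃ i j : ℕ, i ≤ k ∧ j ≤ k ∧ b = (b₀ + (i:ℤ) * g) - (b₀ + (j:ℤ) * g)) ∧
              b ≠ 0 ∧ x = (a:ℝ) / (b:ℝ)}) : ℝ) := by
  classical
  refine ⟨1/16, by norm_num, ?_⟩
  intro n k b₀ g hg hk hB D hD
  set G := g.toNat with hGdef
  have hGg : (G:ℤ) = g := Int.toNat_of_nonneg hg.le
  have hG1 : 1 ≤ G := by omega
  have hgR : ((g:ℤ):ℝ) = ((G:ℕ):ℝ) := by exact_mod_cast hGg.symm
  have hDG : D = (k:ℝ) * G := by rw [hD, hgR]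
  have hkR : (1:ℝ) ≤ (k:ℝ) := by exact_mod_cast hk
  have hGR : (1:ℝ) ≤ (G:ℝ) := by exact_mod_cast hG1
  have hDpos : 0 < D := by rw [hDG]; nlinarith
  -- k*G ≤ n
  have h0 := (hB 0 (Nat.zero_le _)).1
  have hkB := (hB k le_rfl).2
  have hkgn : (k:ℤ) * g ≤ (n:ℤ) := by push_cast at h0 hkB; linarith
  have hkGn : k * G ≤ n := by
    have : ((k * G : ℕ):ℤ) ≤ (n:ℤ) := by push_cast [hGg]; linarith
    exact_mod_cast this
  set ρ : ℝ := ((k + 1 : ℝ) * D)⁻¹ with hρdef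
  have hρpos : 0 < ρ := by
    rw [hρdef]
    apply inv_pos.mpr
    nlinarith
  -- the point family
  set T : Finset (ℕ × ℕ) :=
    ((Icc 1 k ×ˢ Icc 1 k)).filter (fun p => Nat.gcd p.1 p.2 = 1 ∧ p.1 ≤ p.2) with hT
  set f : (ℕ × ℕ) × ℕ → ℝ :=
    fun q => ((q.1.1 + q.2 * q.1.2 : ℕ) : ℝ) / ((q.1.2 * G : ℕ) : ℝ) with hf
  set P : Finset ℝ := (T ×ˢ range G).image f with hP
  set X : Set ℝ :=
    (Set.Icc (0:ℝ) 1 ∩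
      {x : ℝ | ∃ a b : ℤ,
        (∃ a₁ a₂ : ℤ, 0 ≤ a₁ ∧ a₁ ≤ (n:ℤ) ∧ 0 ≤ a₂ ∧ a₂ ≤ (n:ℤ) ∧ a = a₁ - a₂) ∧
        (∃ i j : ℕ, i ≤ k ∧ j ≤ k ∧ b = (b₀ + (i:ℤ) * g) - (b₀ + (j:ℤ) * g)) ∧
        b ≠ 0 ∧ x = (a:ℝ) / (b:ℝ)}) with hX
  -- membership facts for elements of T ×ˢ range G
  have hmem : ∀ q ∈ T ×ˢ range G, (1 ≤ q.1.1 ∧ q.1.1 ≤ q.1.2) ∧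
      (1 ≤ q.1.2 ∧ q.1.2 ≤ k) ∧ q.2 < G := by
    rintro ⟨⟨x, y⟩, m⟩ hq
    simp only [hT, Finset.mem_product, Finset.mem_filter, Finset.mem_Icc,
      Finset.mem_range] at hq
    exact ⟨⟨hq.1.1.1.1, hq.1.2.2⟩, ⟨hq.1.1.2.1, hq.1.1.2.2⟩, hq.2⟩
  have hnum : ∀ q ∈ T ×ˢ range G, q.1.1 + q.2 * q.1.2 ≤ q.1.2 * G := by
    rintro ⟨⟨x, y⟩, m⟩ hq
    obtain ⟨⟨hx1, hxy⟩, ⟨hy1, hyk⟩, hm⟩ := hmem _ hq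
    dsimp only at hx1 hxy hy1 hyk hm ⊢
    calc x + m * y ≤ y + m * y := by omega
      _ = (m + 1) * y := by ring
      _ ≤ G * y := Nat.mul_le_mul_right y (by omega)
      _ = y * G := Nat.mul_comm _ _
  -- P ⊆ X
  have hPX : ∀ q ∈ P, q ∈ X := by
    intro q hq
    rw [hP, Finset.mem_image] at hq
    obtain ⟨w, hw, rfl⟩ := hq
    obtain ⟨⟨x, y⟩, m⟩ := w
    obtain ⟨⟨hx1, hxy⟩, ⟨hy1, hyk⟩, hm⟩ := hmem _ hw
    dsimp only at hx1 hxy hy1 hyk hm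
    have hden : (0:ℝ) < ((y * G : ℕ) : ℝ) := by
      have : 0 < y * G := Nat.mul_pos hy1 hG1
      exact_mod_cast this
    have hnum' : x + m * y ≤ y * G := hnum _ hw
    constructor
    · constructor
      · apply div_nonneg (Nat.cast_nonneg _) hden.le
      · rw [hf]
        simp only
        rw [div_le_one hden]
        exact_mod_cast hnum'
    · refine ⟨((x + m * y : ℕ) : ℤ), (y:ℤ) * g, ?_, ?_, ?_, ?_⟩
      · refine ⟨((x + m * y : ℕ) : ℤ), 0, Int.natCast_nonneg _, ?_, le_refl _,
          Int.natCast_nonneg _, by ring⟩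
        have h1 : x + m * y ≤ n := le_trans hnum'
          (le_trans (Nat.mul_le_mul_right G hyk) hkGn)
        exact_mod_cast h1
      · exact ⟨y, 0, hyk, Nat.zero_le _, by push_cast; ring⟩
      · exact ne_of_gt (mul_pos (by exact_mod_cast hy1) hg)
      · rw [hf]
        simp only
        push_cast
        rw [hgR]
  -- separation
  have hsep : ∀ q ∈ P, ∀ q' ∈ P, q ≠ q' → 1/((k:ℝ)*k*G) ≤ |q - q'| := by
    intro q hq q' hq' hne
    rw [hP, Finset.mem_image] at hq hq'
    obtain ⟨w, hw, rfl⟩ := hq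
    obtain ⟨w', hw', rfl⟩ := hq'
    obtain ⟨⟨hx1, hxy⟩, ⟨hy1, hyk⟩, hm⟩ := hmem _ hw
    obtain ⟨⟨hx1', hxy'⟩, ⟨hy1', hyk'⟩, hm'⟩ := hmem _ hw'
    exact sep_lemma k G _ _ _ _ hG1 hy1 hy1' hyk hyk' hne
  -- covering number lower bound
  have hρδ : ρ < 1/((k:ℝ)*k*G) := by
    rw [hρdef, hDG, inv_eq_one_div]
    apply one_div_lt_one_div_of_lt (by nlinarith)
    nlinarith
  have hcard : P.card ≤ covN ρ X := by
    apply covN_ge ρ hρpos X (Set.inter_subset_left) P hPX (1/((k:ℝ)*k*G)) hρδ hsep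
  -- compute P.card
  have hPcard : P.card = T.card * G := by
    rw [hP, Finset.card_image_of_injOn, Finset.card_product, Finset.card_range]
    have hinj := f_injOn k G hG1
    rw [← Finset.coe_product] at hinj
    rw [hT]
    exact hinj
  have hTcard : ((k:ℝ)^2)/8 ≤ (T.card : ℝ) := T_count k
  -- final computation
  have hc : ((P.card : ℕ) : ℝ) ≤ (covN ρ X : ℝ) := by exact_mod_cast hcard
  rw [hρdef, hX] at hc ⊢
  have hPr : ((P.card : ℕ) : ℝ) = (T.card : ℝ) * G := by rw [hPcard]; push_cast; ring
  rw [hPr] at hc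
  have hfin : (1/16 : ℝ) * ((k + 1 : ℝ) * D) ≤ (T.card : ℝ) * G := by
    rw [hDG]
    nlinarith [hTcard, hkR, hGR, sq_nonneg ((k:ℝ) - 1)]
  linarith
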